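/- Let P be a non-commutative Poisson algebra over K whose associative product is a domain, and let z ∈ P. If u ∈ F^k(z,λ) \ F^{k-1}(z,λ) and w ∈ F^l(z,μ) \ F^{l-1}(z,μ), then uw ∈ F^{k+l}(z,λ+μ) \ F^{k+l-1}(z,λ+μ). -/
import Mathlib


/-- A (possibly non-commutative) Poisson algebra structure on an associative
unital `K`-algebra `P`: a `K`-bilinear Lie bracket satisfying the Leibniz rule. -/
structure PoissonBracket (K P : Type*) [CommRing K] [Ring P] [Algebra K P] where
  bracket : P →ₗ[K] P →ₗ[K] P
  antisymm : ∀ x y : P, bracket x y = - bracket y x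
  jacobi : ∀ x y z : P,
    bracket x (bracket y z) = bracket (bracket x y) z + bracket y (bracket x z)
  leibniz : ∀ x y z : P, bracket x (y * z) = bracket x y * z + y * bracket x z

/-- In a Poisson algebra whose product is a domain, if `u ∈ F^k(z,λ) \ F^{k-1}(z,λ)`
and `w ∈ F^l(z,μ) \ F^{l-1}(z,μ)`, then `uw ∈ F^{k+l}(z,λ+μ) \ F^{k+l-1}(z,λ+μ)`. -/
theorem stmt_3 {K P : Type*} [Field K] [CharZero K] [Ring P] [Algebra K P]
    [NoZeroDivisors P]
    (B : PoissonBracket K P) (z : P) (lam mu : K) (k l : ℕ) (u w : P)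
    (hu : ((B.bracket z - lam • (1 : Module.End K P)) ^ (k + 1)) u = 0)
    (hu' : ((B.bracket z - lam • (1 : Module.End K P)) ^ k) u ≠ 0)
    (hw : ((B.bracket z - mu • (1 : Module.End K P)) ^ (l + 1)) w = 0)
    (hw' : ((B.bracket z - mu • (1 : Module.End K P)) ^ l) w ≠ 0) :
    ((B.bracket z - (lam + mu) • (1 : Module.End K P)) ^ (k + l + 1)) (u * w) = 0 ∧
      ((B.bracket z - (lam + mu) • (1 : Module.End K P)) ^ (k + l)) (u * w) ≠ 0 := by
  have : Nontrivial P := by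
    refine ⟨_, _, hu'⟩
  set D := B.bracket z with hD
  set A := D - lam • (1 : Module.End K P) with hA
  set C := D - mu • (1 : Module.End K P) with hC
  set E := D - (lam + mu) • (1 : Module.End K P) with hEdef
  have hE : ∀ x y : P, E (x * y) = A x * y + x * C y := by
    intro x y
    simp only [hEdef, hA, hC, hD, LinearMap.sub_apply, LinearMap.smul_apply,
      Module.End.one_apply, LinearMap.add_apply, B.leibniz, add_smul, smul_mul_assoc, mul_smul_comm,
      sub_mul, mul_sub]
    abel
  -- powers applied
  have hApow : ∀ (i : ℕ) (x : P), (A ^ (i + 1)) x = A ((A ^ i) x) := by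
    intro i x; rw [pow_succ', Module.End.mul_apply]
  have hCpow : ∀ (i : ℕ) (x : P), (C ^ (i + 1)) x = C ((C ^ i) x) := by
    intro i x; rw [pow_succ', Module.End.mul_apply]
  have hAzero : ∀ i : ℕ, k + 1 ≤ i → (A ^ i) u = 0 := by
    intro i hi
    obtain ⟨j, rfl⟩ := Nat.exists_eq_add_of_le hi
    rw [add_comm, pow_add, Module.End.mul_apply, hu, map_zero]
  have hCzero : ∀ i : ℕ, l + 1 ≤ i → (C ^ i) w = 0 := by
    intro i hi
    obtain ⟨j, rfl⟩ := Nat.exists_eq_add_of_le hi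
    rw [add_comm, pow_add, Module.End.mul_apply, hw, map_zero]
  have hEn : ∀ n : ℕ, (E ^ n) (u * w)
      = ∑ i ∈ Finset.range (n + 1), (n.choose i) • ((A ^ i) u * (C ^ (n - i)) w) := by
    intro n
    induction n with
    | zero => simp
    | succ n ih =>
      have h1 : (E ^ (n + 1)) (u * w) = E ((E ^ n) (u * w)) := by
        rw [pow_succ', Module.End.mul_apply]
      rw [h1, ih, map_sum]
      have h2 : ∀ i ∈ Finset.range (n + 1),
          E ((n.choose i) • ((A ^ i) u * (C ^ (n - i)) w))
          = (n.choose i) • ((A ^ (i + 1)) u * (C ^ (n - i)) w)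
          + (n.choose i) • ((A ^ i) u * (C ^ (n - i + 1)) w) := by
        intro i _
        rw [map_nsmul, hE, smul_add, hApow, hCpow]
      rw [Finset.sum_congr rfl h2, Finset.sum_add_distrib]
      -- now reindex
      have hsub : ∀ i ∈ Finset.range (n + 1), n - i + 1 = n + 1 - i := by
        intro i hi
        have := Finset.mem_range.mp hi
        omega
      have e1 : ∑ i ∈ Finset.range (n + 1),
            (n.choose i) • ((A ^ i) u * (C ^ (n - i + 1)) w)
          = ∑ i ∈ Finset.range (n + 1),
            (n.choose i) • ((A ^ i) u * (C ^ (n + 1 - i)) w) := by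
        refine Finset.sum_congr rfl fun i hi => ?_
        rw [hsub i hi]
      rw [e1]
      -- RHS: peel off first term
      rw [Finset.sum_range_succ' (fun i => ((n + 1).choose i) • ((A ^ i) u * (C ^ (n + 1 - i)) w)) (n + 1)]
      simp only [Nat.choose_succ_succ, add_smul, Nat.choose_zero_right, one_smul,
        Nat.succ_sub_succ, Nat.sub_zero, Nat.sub_self]
      rw [Finset.sum_add_distrib]
      -- match pieces
      have e2 : ∑ i ∈ Finset.range (n + 1),
            (n.choose i) • ((A ^ i) u * (C ^ (n + 1 - i)) w)
          = (∑ i ∈ Finset.range n,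
              (n.choose (i + 1)) • ((A ^ (i + 1)) u * (C ^ (n - i)) w))
            + (A ^ 0) u * (C ^ (n + 1)) w := by
        rw [Finset.sum_range_succ' (fun i => (n.choose i) • ((A ^ i) u * (C ^ (n + 1 - i)) w)) n]
        simp only [Nat.choose_zero_right, one_smul, Nat.succ_sub_succ, Nat.sub_zero]
      have e3 : ∑ i ∈ Finset.range (n + 1),
            (n.choose (i + 1)) • ((A ^ (i + 1)) u * (C ^ (n - i)) w)
          = ∑ i ∈ Finset.range n,
            (n.choose (i + 1)) • ((A ^ (i + 1)) u * (C ^ (n - i)) w) := by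
        rw [Finset.sum_range_succ]
        simp [Nat.choose_succ_self]
      rw [e2, e3]
      abel
  constructor
  · rw [hEn (k + l + 1)]
    refine Finset.sum_eq_zero fun i hi => ?_
    rcases le_or_gt i k with h | h
    · have : (C ^ (k + l + 1 - i)) w = 0 := hCzero _ (by omega)
      rw [this, mul_zero, smul_zero]
    · have : (A ^ i) u = 0 := hAzero _ (by omega)
      rw [this, zero_mul, smul_zero]
  · rw [hEn (k + l)]
    have hmain : ∑ i ∈ Finset.range (k + l + 1),
        ((k + l).choose i) • ((A ^ i) u * (C ^ (k + l - i)) w)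
        = ((k + l).choose k) • ((A ^ k) u * (C ^ l) w) := by
      rw [Finset.sum_eq_single k]
      · rw [Nat.add_sub_cancel_left]
      · intro i hi hne
        rcases lt_or_gt_of_ne hne with h | h
        · have : (C ^ (k + l - i)) w = 0 := hCzero _ (by omega)
          rw [this, mul_zero, smul_zero]
        · have : (A ^ i) u = 0 := hAzero _ (by omega)
          rw [this, zero_mul, smul_zero]
      · intro h
        exact absurd (Finset.mem_range.mpr (by omega)) h
    rw [hmain]
    have hprod : (A ^ k) u * (C ^ l) w ≠ 0 := mul_ne_zero hu' hw'
    have hcast : (((k + l).choose k : ℕ) : P) ≠ 0 := by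
      have h1 : (((k + l).choose k : ℕ) : K) ≠ 0 := by
        exact_mod_cast Nat.choose_pos (Nat.le_add_right k l) |>.ne'
      have h2 : (((k + l).choose k : ℕ) : P) = algebraMap K P (((k + l).choose k : ℕ) : K) := by
        rw [map_natCast]
      rw [h2]
      have := (algebraMap K P).injective.ne h1
      simpa using this
    rw [nsmul_eq_mul]
    exact mul_ne_zero hcast hprod
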